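/- Let p > 3 be a prime and let G = Φ₃₁(1⁶) be the group of order p⁶ with presentation on generators α, α₁, α₂, β₁, β₂, γ and relations [α₁,α] = β₁, [α₂,α] = β₂, [α₁,β₁] = γ, [α₂,β₂] = γ, αᵖ = α₁ᵖ = α₂ᵖ = β₁ᵖ = β₂ᵖ = γᵖ = 1, with every commutator of a pair of generators not listed among these relations declared trivial. Then the Bogomolov multiplier B₀(G) is trivial. -/

import Mathlib

/-!
Φ₃₁(1⁶): relations [α₁,α]=β₁, [α₂,α]=β₂, [α₁,β₁]=γ, [α₂,β₂]=γ, all pth powers trivial.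
-/

namespace Stmt8

/-- The additive group `ℚ/ℤ`. -/
abbrev QZ : Type := ℚ ⧸ AddSubgroup.zmultiples (1 : ℚ)

/-- An inhomogeneous 2-cocycle on `G` with values in `ℚ/ℤ` (trivial `G`-action). -/
def IsTwoCocycle {G : Type} [Group G] (f : G → G → QZ) : Prop :=
  ∀ g h j : G, f h j - f (g * h) j + f g (h * j) - f g h = 0

/-- An inhomogeneous 2-coboundary on `G` with values in `ℚ/ℤ` (trivial `G`-action). -/
def IsTwoCoboundary {G : Type} [Group G] (f : G → G → QZ) : Prop :=
  ∃ c : G → QZ, ∀ g h : G, f g h = c h - c (g * h) + c g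

/-- A subgroup is bicyclic if it is abelian and generated by at most two elements
(equivalently, cyclic or a direct product of two cyclic groups). -/
def IsBicyclic {G : Type} [Group G] (A : Subgroup G) : Prop :=
  (∀ x y : A, x * y = y * x) ∧ ∃ a b : G, A = Subgroup.closure {a, b}

/-- The Bogomolov multiplier `B₀(G) ⊆ H²(G, ℚ/ℤ)` is trivial, phrased at the level of
2-cocycles: every 2-cocycle whose restriction to each bicyclic subgroup is a coboundary
(i.e. whose class restricts to zero on each bicyclic subgroup) is itself a coboundary
(i.e. its class is zero). -/
def BogomolovMultiplierIsTrivial (G : Type) [Group G] : Prop :=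
  ∀ f : G → G → QZ, IsTwoCocycle f →
    (∀ A : Subgroup G, IsBicyclic A → IsTwoCoboundary (fun a b : ↥A => f ↑a ↑b)) →
    IsTwoCoboundary f

/-- The Bogomolov multiplier `B₀(G) ⊆ H²(G, ℚ/ℤ)` is nontrivial, phrased at the level of
2-cocycles. -/
def BogomolovMultiplierIsNontrivial (G : Type) [Group G] : Prop :=
  ∃ f : G → G → QZ, IsTwoCocycle f ∧
    (∀ A : Subgroup G, IsBicyclic A → IsTwoCoboundary (fun a b : ↥A => f ↑a ↑b)) ∧
    ¬ IsTwoCoboundary f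

/-- The generators. -/
inductive Gen | a | a1 | a2 | b1 | b2 | g

open FreeGroup

/-- The commutator `[x,y] = x⁻¹y⁻¹xy`. -/
def c (x y : FreeGroup Gen) : FreeGroup Gen := x⁻¹ * y⁻¹ * x * y

/-- The defining relators. -/
def rels (p : ℕ) : Set (FreeGroup Gen) :=
  { c (of .a1) (of .a) * (of Gen.b1)⁻¹,
    c (of .a2) (of .a) * (of Gen.b2)⁻¹,
    c (of .a1) (of .b1) * (of Gen.g)⁻¹,
    c (of .a2) (of .b2) * (of Gen.g)⁻¹,
    c (of .a) (of .b1),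
    c (of .a) (of .b2),
    c (of .a) (of .g),
    c (of .a1) (of .a2),
    c (of .a1) (of .b2),
    c (of .a1) (of .g),
    c (of .a2) (of .b1),
    c (of .a2) (of .g),
    c (of .b1) (of .b2),
    c (of .b1) (of .g),
    c (of .b2) (of .g),
    (of Gen.a) ^ p,
    (of Gen.a1) ^ p,
    (of Gen.a2) ^ p,
    (of Gen.b1) ^ p,
    (of Gen.b2) ^ p,
    (of Gen.g) ^ p }

/- general group auxiliary lemmas -/

private lemma com_one_iff {K : Type*} [Group K] {x y : K} :
    x⁻¹ * y⁻¹ * x * y = 1 ↔ x * y = y * x := by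
  constructor
  · intro h
    calc x * y = y * x * (x⁻¹ * y⁻¹ * x * y) := by group
    _ = y * x := by rw [h, mul_one]
  · intro h
    calc x⁻¹ * y⁻¹ * x * y = x⁻¹ * y⁻¹ * (x * y) := by group
    _ = x⁻¹ * y⁻¹ * (y * x) := by rw [h]
    _ = 1 := by group

private lemma com_move {K : Type*} [Group K] (x y : K) :
    x * y = y * x * (x⁻¹ * y⁻¹ * x * y) := by group

private lemma pow_shift {K : Type*} [Group K] {x y z : K} (hxy : x * y = y * x * z)
    (hzy : z * y = y * z) : ∀ n : ℕ, x * y ^ n = y ^ n * x * z ^ n := by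
  intro n
  induction n with
  | zero => simp
  | succ n ih =>
    have hc : z ^ n * y = y * z ^ n := ((show Commute z y from hzy).pow_left n).eq
    calc x * y ^ (n + 1) = (x * y ^ n) * y := by rw [pow_succ, mul_assoc]
    _ = y ^ n * x * z ^ n * y := by rw [ih]
    _ = y ^ n * x * (z ^ n * y) := by rw [mul_assoc]
    _ = y ^ n * x * (y * z ^ n) := by rw [hc]
    _ = y ^ n * (x * y) * z ^ n := by group
    _ = y ^ n * (y * x * z) * z ^ n := by rw [hxy]
    _ = y ^ (n + 1) * x * z ^ (n + 1) := by group

private lemma keyCommute {K : Type*} [Group K] {X1 X2 Y1 Y2 Z W : K}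
    (h1Y2 : X1 * Y2 = Y2 * X1) (h2Y1 : X2 * Y1 = Y1 * X2)
    (hZ : X1 * Y1 = Y1 * X1 * Z) (hW : X2 * Y2 = Y2 * X2 * W)
    (hZX2 : Z * X2 = X2 * Z) (hZY2 : Z * Y2 = Y2 * Z) (hWY2 : W * Y2 = Y2 * W) :
    (X1 * X2) * (Y1 * Y2⁻¹) = (Y1 * Y2⁻¹) * (X1 * X2) * (Z * W⁻¹) := by
  have hw1 : W * Y2⁻¹ = Y2⁻¹ * W := ((show Commute W Y2 from hWY2).inv_right).eq
  have h2 : Y2⁻¹ * X2 = X2 * Y2⁻¹ * W := by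
    calc Y2⁻¹ * X2 = Y2⁻¹ * (X2 * Y2) * Y2⁻¹ := by group
    _ = Y2⁻¹ * (Y2 * X2 * W) * Y2⁻¹ := by rw [hW]
    _ = X2 * (W * Y2⁻¹) := by group
    _ = X2 * (Y2⁻¹ * W) := by rw [hw1]
    _ = X2 * Y2⁻¹ * W := by rw [mul_assoc]
  have hX2Y2inv : X2 * Y2⁻¹ = Y2⁻¹ * X2 * W⁻¹ := by rw [h2]; group
  have hX1Y2inv : X1 * Y2⁻¹ = Y2⁻¹ * X1 := ((show Commute X1 Y2 from h1Y2).inv_right).eq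
  have hZY2inv : Z * Y2⁻¹ = Y2⁻¹ * Z := ((show Commute Z Y2 from hZY2).inv_right).eq
  calc (X1 * X2) * (Y1 * Y2⁻¹) = X1 * (X2 * Y1) * Y2⁻¹ := by group
  _ = X1 * (Y1 * X2) * Y2⁻¹ := by rw [h2Y1]
  _ = (X1 * Y1) * (X2 * Y2⁻¹) := by group
  _ = (Y1 * X1 * Z) * (Y2⁻¹ * X2 * W⁻¹) := by rw [hZ, hX2Y2inv]
  _ = Y1 * X1 * (Z * Y2⁻¹) * (X2 * W⁻¹) := by group
  _ = Y1 * X1 * (Y2⁻¹ * Z) * (X2 * W⁻¹) := by rw [hZY2inv]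
  _ = Y1 * (X1 * Y2⁻¹) * (Z * X2) * W⁻¹ := by group
  _ = Y1 * (Y2⁻¹ * X1) * (X2 * Z) * W⁻¹ := by rw [hX1Y2inv, hZX2]
  _ = (Y1 * Y2⁻¹) * (X1 * X2) * (Z * W⁻¹) := by group

private lemma qz_nsmul_surj (n : ℕ) (hn : n ≠ 0) (q : QZ) : ∃ z : QZ, n • z = q := by
  obtain ⟨r, rfl⟩ := QuotientAddGroup.mk_surjective q
  refine ⟨QuotientAddGroup.mk (r / n), ?_⟩
  rw [← QuotientAddGroup.mk_nsmul]
  congr 1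
  rw [nsmul_eq_mul, mul_comm, div_mul_cancel₀]
  exact_mod_cast hn


section ExtSec

variable {G : Type} [Group G]

private lemma f_one_left {f : G → G → QZ} (hf : IsTwoCocycle f) (hn : f 1 1 = 0) (h : G) :
    f 1 h = 0 := by
  have h1 := hf 1 1 h
  simp only [one_mul] at h1
  rw [hn] at h1
  simpa using h1

private lemma f_one_right {f : G → G → QZ} (hf : IsTwoCocycle f) (hn : f 1 1 = 0) (g : G) :
    f g 1 = 0 := by
  have h1 := hf g 1 1
  simp only [one_mul, mul_one] at h1
  rw [hn] at h1
  simpa using h1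

private lemma coc {f : G → G → QZ} (hf : IsTwoCocycle f) (x y w : G) :
    f x y + f (x * y) w = f y w + f x (y * w) := by
  have h := hf x y w
  have h2 : (f y w + f x (y * w)) - (f x y + f (x * y) w) = 0 := by
    rw [show (f y w + f x (y * w)) - (f x y + f (x * y) w)
        = f y w - f (x * y) w + f x (y * w) - f x y from by abel]
    exact h
  have h3 : (f x y + f (x * y) w) - (f y w + f x (y * w)) = 0 := by
    rw [show (f x y + f (x * y) w) - (f y w + f x (y * w))
        = -((f y w + f x (y * w)) - (f x y + f (x * y) w)) from by abel, h2, neg_zero]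
  exact sub_eq_zero.mp h3

@[ext]
structure Ext (f : G → G → QZ) (hf : IsTwoCocycle f) (hn : f 1 1 = 0) : Type where
  z : QZ
  g : G

variable {f : G → G → QZ} {hf : IsTwoCocycle f} {hn : f 1 1 = 0}

instance extGroup : Group (Ext f hf hn) where
  mul x y := ⟨x.z + y.z + f x.g y.g, x.g * y.g⟩
  one := ⟨0, 1⟩
  inv x := ⟨-x.z - f x.g⁻¹ x.g, x.g⁻¹⟩
  mul_assoc x y w := by
    apply Ext.ext
    · show (x.z + y.z + f x.g y.g) + w.z + f (x.g * y.g) w.g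
        = x.z + (y.z + w.z + f y.g w.g) + f x.g (y.g * w.g)
      have h := coc hf x.g y.g w.g
      calc (x.z + y.z + f x.g y.g) + w.z + f (x.g * y.g) w.g
          = x.z + (y.z + w.z) + (f x.g y.g + f (x.g * y.g) w.g) := by abel
      _ = x.z + (y.z + w.z) + (f y.g w.g + f x.g (y.g * w.g)) := by rw [h]
      _ = x.z + (y.z + w.z + f y.g w.g) + f x.g (y.g * w.g) := by abel
    · exact mul_assoc x.g y.g w.g
  one_mul x := by
    apply Ext.ext
    · show 0 + x.z + f 1 x.g = x.z
      rw [f_one_left hf hn]; abel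
    · exact one_mul x.g
  mul_one x := by
    apply Ext.ext
    · show x.z + 0 + f x.g 1 = x.z
      rw [f_one_right hf hn]; abel
    · exact mul_one x.g
  inv_mul_cancel x := by
    apply Ext.ext
    · show (-x.z - f x.g⁻¹ x.g) + x.z + f x.g⁻¹ x.g = 0
      abel
    · exact inv_mul_cancel x.g

@[simp] private lemma mul_z (x y : Ext f hf hn) : (x * y).z = x.z + y.z + f x.g y.g := rfl
@[simp] private lemma mul_g (x y : Ext f hf hn) : (x * y).g = x.g * y.g := rfl
@[simp] private lemma one_z : (1 : Ext f hf hn).z = 0 := rfl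
@[simp] private lemma one_g : (1 : Ext f hf hn).g = 1 := rfl
@[simp] private lemma inv_g (x : Ext f hf hn) : (x⁻¹).g = x.g⁻¹ := rfl

private lemma pow_g (x : Ext f hf hn) (n : ℕ) : (x ^ n).g = x.g ^ n := by
  induction n with
  | zero => simp
  | succ n ih => rw [pow_succ, pow_succ, mul_g, ih]

private def phi (f : G → G → QZ) (hf : IsTwoCocycle f) (hn : f 1 1 = 0) (z : QZ) :
    Ext f hf hn := ⟨z, 1⟩

private lemma phi_mul_any (z : QZ) (e : Ext f hf hn) :
    phi f hf hn z * e = ⟨z + e.z, e.g⟩ := by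
  apply Ext.ext
  · show z + e.z + f 1 e.g = z + e.z
    rw [f_one_left hf hn]; abel
  · exact one_mul e.g

private lemma any_mul_phi (e : Ext f hf hn) (z : QZ) :
    e * phi f hf hn z = ⟨e.z + z, e.g⟩ := by
  apply Ext.ext
  · show e.z + z + f e.g 1 = e.z + z
    rw [f_one_right hf hn]; abel
  · exact mul_one e.g

private lemma phi_central (z : QZ) (e : Ext f hf hn) :
    phi f hf hn z * e = e * phi f hf hn z := by
  rw [phi_mul_any, any_mul_phi, add_comm]

private lemma phi_pow (z : QZ) (n : ℕ) :
    (phi f hf hn z) ^ n = phi f hf hn (n • z) := by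
  induction n with
  | zero =>
    apply Ext.ext
    · show (0 : QZ) = (0 : ℕ) • z; simp
    · rfl
  | succ n ih =>
    rw [pow_succ, ih, any_mul_phi, succ_nsmul]
    rfl

private lemma eq_phi_of_g_one (e : Ext f hf hn) (h : e.g = 1) : e = phi f hf hn e.z := by
  apply Ext.ext
  · rfl
  · exact h

private lemma mk_eq_phi_mul (z : QZ) (x : G) :
    (⟨z, x⟩ : Ext f hf hn) = phi f hf hn z * ⟨0, x⟩ := by
  rw [phi_mul_any]
  apply Ext.ext
  · show z = z + 0; rw [add_zero]
  · rfl

private lemma exists_lift_pow_one {p : ℕ} (hp : p ≠ 0) (x : G) (hx : x ^ p = 1) :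
    ∃ z : QZ, (⟨z, x⟩ : Ext f hf hn) ^ p = 1 := by
  set u : Ext f hf hn := ⟨0, x⟩ with hu
  have hug : (u ^ p).g = 1 := by rw [pow_g]; exact hx
  obtain ⟨z, hz⟩ := qz_nsmul_surj p hp (-(u ^ p).z)
  refine ⟨z, ?_⟩
  rw [mk_eq_phi_mul, (Commute.mul_pow (show Commute (phi f hf hn z) u from phi_central z u)),
    phi_pow, hz, eq_phi_of_g_one (u ^ p) hug, phi_mul_any]
  apply Ext.ext
  · show -(u ^ p).z + (u ^ p).z = 0
    abel
  · rfl

private lemma comm_of_base (hsym : ∀ x y : G, x * y = y * x → f x y = f y x)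
    (u v : Ext f hf hn) (h : u.g * v.g = v.g * u.g) : u * v = v * u := by
  apply Ext.ext
  · show u.z + v.z + f u.g v.g = v.z + u.z + f v.g u.g
    rw [hsym _ _ h]; abel
  · exact h

end ExtSec



private theorem aux_split (p : ℕ) (hp : p ≠ 0)
    (f : PresentedGroup (rels p) → PresentedGroup (rels p) → QZ)
    (hf : IsTwoCocycle f) (hn : f 1 1 = 0)
    (hsym : ∀ x y : PresentedGroup (rels p), x * y = y * x → f x y = f y x) :
    IsTwoCoboundary f := by
  have hrel : ∀ r ∈ rels p, PresentedGroup.mk (rels p) r = 1 := fun r hr =>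
    (QuotientGroup.eq_one_iff r).mpr (Subgroup.subset_normalClosure hr)
  have hmk : ∀ x : Gen, PresentedGroup.mk (rels p) (FreeGroup.of x) = PresentedGroup.of x := fun _ => rfl
  have hb1G : (PresentedGroup.of (rels := rels p) Gen.a1)⁻¹ * (PresentedGroup.of (rels := rels p) Gen.a)⁻¹ * (PresentedGroup.of (rels := rels p) Gen.a1) * (PresentedGroup.of (rels := rels p) Gen.a) = (PresentedGroup.of (rels := rels p) Gen.b1) :=
    mul_inv_eq_one.mp (by
      simpa only [c, _root_.map_mul, _root_.map_inv, hmk] using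
        hrel (c (FreeGroup.of .a1) (FreeGroup.of .a) * (FreeGroup.of Gen.b1)⁻¹) (by unfold rels; exact Set.mem_insert _ _))
  have hb2G : (PresentedGroup.of (rels := rels p) Gen.a2)⁻¹ * (PresentedGroup.of (rels := rels p) Gen.a)⁻¹ * (PresentedGroup.of (rels := rels p) Gen.a2) * (PresentedGroup.of (rels := rels p) Gen.a) = (PresentedGroup.of (rels := rels p) Gen.b2) :=
    mul_inv_eq_one.mp (by
      simpa only [c, _root_.map_mul, _root_.map_inv, hmk] using
        hrel (c (FreeGroup.of .a2) (FreeGroup.of .a) * (FreeGroup.of Gen.b2)⁻¹) (by unfold rels; exact Set.mem_insert_of_mem _ (Set.mem_insert _ _)))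
  have hg1G : (PresentedGroup.of (rels := rels p) Gen.a1)⁻¹ * (PresentedGroup.of (rels := rels p) Gen.b1)⁻¹ * (PresentedGroup.of (rels := rels p) Gen.a1) * (PresentedGroup.of (rels := rels p) Gen.b1) = (PresentedGroup.of (rels := rels p) Gen.g) :=
    mul_inv_eq_one.mp (by
      simpa only [c, _root_.map_mul, _root_.map_inv, hmk] using
        hrel (c (FreeGroup.of .a1) (FreeGroup.of .b1) * (FreeGroup.of Gen.g)⁻¹) (by unfold rels; exact Set.mem_insert_of_mem _ (Set.mem_insert_of_mem _ (Set.mem_insert _ _))))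
  have hg2G : (PresentedGroup.of (rels := rels p) Gen.a2)⁻¹ * (PresentedGroup.of (rels := rels p) Gen.b2)⁻¹ * (PresentedGroup.of (rels := rels p) Gen.a2) * (PresentedGroup.of (rels := rels p) Gen.b2) = (PresentedGroup.of (rels := rels p) Gen.g) :=
    mul_inv_eq_one.mp (by
      simpa only [c, _root_.map_mul, _root_.map_inv, hmk] using
        hrel (c (FreeGroup.of .a2) (FreeGroup.of .b2) * (FreeGroup.of Gen.g)⁻¹) (by unfold rels; exact Set.mem_insert_of_mem _ (Set.mem_insert_of_mem _ (Set.mem_insert_of_mem _ (Set.mem_insert _ _)))))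
  have cab1 : (PresentedGroup.of (rels := rels p) Gen.a) * (PresentedGroup.of (rels := rels p) Gen.b1) = (PresentedGroup.of (rels := rels p) Gen.b1) * (PresentedGroup.of (rels := rels p) Gen.a) :=
    com_one_iff.mp (by
      simpa only [c, _root_.map_mul, _root_.map_inv, hmk] using
        hrel (c (FreeGroup.of .a) (FreeGroup.of .b1)) (by unfold rels; exact Set.mem_insert_of_mem _ (Set.mem_insert_of_mem _ (Set.mem_insert_of_mem _ (Set.mem_insert_of_mem _ (Set.mem_insert _ _))))))
  have cab2 : (PresentedGroup.of (rels := rels p) Gen.a) * (PresentedGroup.of (rels := rels p) Gen.b2) = (PresentedGroup.of (rels := rels p) Gen.b2) * (PresentedGroup.of (rels := rels p) Gen.a) :=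
    com_one_iff.mp (by
      simpa only [c, _root_.map_mul, _root_.map_inv, hmk] using
        hrel (c (FreeGroup.of .a) (FreeGroup.of .b2)) (by unfold rels; exact Set.mem_insert_of_mem _ (Set.mem_insert_of_mem _ (Set.mem_insert_of_mem _ (Set.mem_insert_of_mem _ (Set.mem_insert_of_mem _ (Set.mem_insert _ _)))))))
  have cag : (PresentedGroup.of (rels := rels p) Gen.a) * (PresentedGroup.of (rels := rels p) Gen.g) = (PresentedGroup.of (rels := rels p) Gen.g) * (PresentedGroup.of (rels := rels p) Gen.a) :=
    com_one_iff.mp (by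
      simpa only [c, _root_.map_mul, _root_.map_inv, hmk] using
        hrel (c (FreeGroup.of .a) (FreeGroup.of .g)) (by unfold rels; exact Set.mem_insert_of_mem _ (Set.mem_insert_of_mem _ (Set.mem_insert_of_mem _ (Set.mem_insert_of_mem _ (Set.mem_insert_of_mem _ (Set.mem_insert_of_mem _ (Set.mem_insert _ _))))))))
  have ca12 : (PresentedGroup.of (rels := rels p) Gen.a1) * (PresentedGroup.of (rels := rels p) Gen.a2) = (PresentedGroup.of (rels := rels p) Gen.a2) * (PresentedGroup.of (rels := rels p) Gen.a1) :=
    com_one_iff.mp (by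
      simpa only [c, _root_.map_mul, _root_.map_inv, hmk] using
        hrel (c (FreeGroup.of .a1) (FreeGroup.of .a2)) (by unfold rels; exact Set.mem_insert_of_mem _ (Set.mem_insert_of_mem _ (Set.mem_insert_of_mem _ (Set.mem_insert_of_mem _ (Set.mem_insert_of_mem _ (Set.mem_insert_of_mem _ (Set.mem_insert_of_mem _ (Set.mem_insert _ _)))))))))
  have ca1b2 : (PresentedGroup.of (rels := rels p) Gen.a1) * (PresentedGroup.of (rels := rels p) Gen.b2) = (PresentedGroup.of (rels := rels p) Gen.b2) * (PresentedGroup.of (rels := rels p) Gen.a1) :=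
    com_one_iff.mp (by
      simpa only [c, _root_.map_mul, _root_.map_inv, hmk] using
        hrel (c (FreeGroup.of .a1) (FreeGroup.of .b2)) (by unfold rels; exact Set.mem_insert_of_mem _ (Set.mem_insert_of_mem _ (Set.mem_insert_of_mem _ (Set.mem_insert_of_mem _ (Set.mem_insert_of_mem _ (Set.mem_insert_of_mem _ (Set.mem_insert_of_mem _ (Set.mem_insert_of_mem _ (Set.mem_insert _ _))))))))))
  have ca1g : (PresentedGroup.of (rels := rels p) Gen.a1) * (PresentedGroup.of (rels := rels p) Gen.g) = (PresentedGroup.of (rels := rels p) Gen.g) * (PresentedGroup.of (rels := rels p) Gen.a1) :=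
    com_one_iff.mp (by
      simpa only [c, _root_.map_mul, _root_.map_inv, hmk] using
        hrel (c (FreeGroup.of .a1) (FreeGroup.of .g)) (by unfold rels; exact Set.mem_insert_of_mem _ (Set.mem_insert_of_mem _ (Set.mem_insert_of_mem _ (Set.mem_insert_of_mem _ (Set.mem_insert_of_mem _ (Set.mem_insert_of_mem _ (Set.mem_insert_of_mem _ (Set.mem_insert_of_mem _ (Set.mem_insert_of_mem _ (Set.mem_insert _ _)))))))))))
  have ca2b1 : (PresentedGroup.of (rels := rels p) Gen.a2) * (PresentedGroup.of (rels := rels p) Gen.b1) = (PresentedGroup.of (rels := rels p) Gen.b1) * (PresentedGroup.of (rels := rels p) Gen.a2) :=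
    com_one_iff.mp (by
      simpa only [c, _root_.map_mul, _root_.map_inv, hmk] using
        hrel (c (FreeGroup.of .a2) (FreeGroup.of .b1)) (by unfold rels; exact Set.mem_insert_of_mem _ (Set.mem_insert_of_mem _ (Set.mem_insert_of_mem _ (Set.mem_insert_of_mem _ (Set.mem_insert_of_mem _ (Set.mem_insert_of_mem _ (Set.mem_insert_of_mem _ (Set.mem_insert_of_mem _ (Set.mem_insert_of_mem _ (Set.mem_insert_of_mem _ (Set.mem_insert _ _))))))))))))
  have ca2g : (PresentedGroup.of (rels := rels p) Gen.a2) * (PresentedGroup.of (rels := rels p) Gen.g) = (PresentedGroup.of (rels := rels p) Gen.g) * (PresentedGroup.of (rels := rels p) Gen.a2) :=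
    com_one_iff.mp (by
      simpa only [c, _root_.map_mul, _root_.map_inv, hmk] using
        hrel (c (FreeGroup.of .a2) (FreeGroup.of .g)) (by unfold rels; exact Set.mem_insert_of_mem _ (Set.mem_insert_of_mem _ (Set.mem_insert_of_mem _ (Set.mem_insert_of_mem _ (Set.mem_insert_of_mem _ (Set.mem_insert_of_mem _ (Set.mem_insert_of_mem _ (Set.mem_insert_of_mem _ (Set.mem_insert_of_mem _ (Set.mem_insert_of_mem _ (Set.mem_insert_of_mem _ (Set.mem_insert _ _)))))))))))))
  have cb12 : (PresentedGroup.of (rels := rels p) Gen.b1) * (PresentedGroup.of (rels := rels p) Gen.b2) = (PresentedGroup.of (rels := rels p) Gen.b2) * (PresentedGroup.of (rels := rels p) Gen.b1) :=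
    com_one_iff.mp (by
      simpa only [c, _root_.map_mul, _root_.map_inv, hmk] using
        hrel (c (FreeGroup.of .b1) (FreeGroup.of .b2)) (by unfold rels; exact Set.mem_insert_of_mem _ (Set.mem_insert_of_mem _ (Set.mem_insert_of_mem _ (Set.mem_insert_of_mem _ (Set.mem_insert_of_mem _ (Set.mem_insert_of_mem _ (Set.mem_insert_of_mem _ (Set.mem_insert_of_mem _ (Set.mem_insert_of_mem _ (Set.mem_insert_of_mem _ (Set.mem_insert_of_mem _ (Set.mem_insert_of_mem _ (Set.mem_insert _ _))))))))))))))
  have cb1g : (PresentedGroup.of (rels := rels p) Gen.b1) * (PresentedGroup.of (rels := rels p) Gen.g) = (PresentedGroup.of (rels := rels p) Gen.g) * (PresentedGroup.of (rels := rels p) Gen.b1) :=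
    com_one_iff.mp (by
      simpa only [c, _root_.map_mul, _root_.map_inv, hmk] using
        hrel (c (FreeGroup.of .b1) (FreeGroup.of .g)) (by unfold rels; exact Set.mem_insert_of_mem _ (Set.mem_insert_of_mem _ (Set.mem_insert_of_mem _ (Set.mem_insert_of_mem _ (Set.mem_insert_of_mem _ (Set.mem_insert_of_mem _ (Set.mem_insert_of_mem _ (Set.mem_insert_of_mem _ (Set.mem_insert_of_mem _ (Set.mem_insert_of_mem _ (Set.mem_insert_of_mem _ (Set.mem_insert_of_mem _ (Set.mem_insert_of_mem _ (Set.mem_insert _ _)))))))))))))))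
  have cb2g : (PresentedGroup.of (rels := rels p) Gen.b2) * (PresentedGroup.of (rels := rels p) Gen.g) = (PresentedGroup.of (rels := rels p) Gen.g) * (PresentedGroup.of (rels := rels p) Gen.b2) :=
    com_one_iff.mp (by
      simpa only [c, _root_.map_mul, _root_.map_inv, hmk] using
        hrel (c (FreeGroup.of .b2) (FreeGroup.of .g)) (by unfold rels; exact Set.mem_insert_of_mem _ (Set.mem_insert_of_mem _ (Set.mem_insert_of_mem _ (Set.mem_insert_of_mem _ (Set.mem_insert_of_mem _ (Set.mem_insert_of_mem _ (Set.mem_insert_of_mem _ (Set.mem_insert_of_mem _ (Set.mem_insert_of_mem _ (Set.mem_insert_of_mem _ (Set.mem_insert_of_mem _ (Set.mem_insert_of_mem _ (Set.mem_insert_of_mem _ (Set.mem_insert_of_mem _ (Set.mem_insert _ _))))))))))))))))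
  have paG : (PresentedGroup.of (rels := rels p) Gen.a) ^ p = 1 := by
    simpa only [_root_.map_pow, hmk] using hrel ((FreeGroup.of Gen.a) ^ p) (by unfold rels; exact Set.mem_insert_of_mem _ (Set.mem_insert_of_mem _ (Set.mem_insert_of_mem _ (Set.mem_insert_of_mem _ (Set.mem_insert_of_mem _ (Set.mem_insert_of_mem _ (Set.mem_insert_of_mem _ (Set.mem_insert_of_mem _ (Set.mem_insert_of_mem _ (Set.mem_insert_of_mem _ (Set.mem_insert_of_mem _ (Set.mem_insert_of_mem _ (Set.mem_insert_of_mem _ (Set.mem_insert_of_mem _ (Set.mem_insert_of_mem _ (Set.mem_insert _ _))))))))))))))))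
  have pa1G : (PresentedGroup.of (rels := rels p) Gen.a1) ^ p = 1 := by
    simpa only [_root_.map_pow, hmk] using hrel ((FreeGroup.of Gen.a1) ^ p) (by unfold rels; exact Set.mem_insert_of_mem _ (Set.mem_insert_of_mem _ (Set.mem_insert_of_mem _ (Set.mem_insert_of_mem _ (Set.mem_insert_of_mem _ (Set.mem_insert_of_mem _ (Set.mem_insert_of_mem _ (Set.mem_insert_of_mem _ (Set.mem_insert_of_mem _ (Set.mem_insert_of_mem _ (Set.mem_insert_of_mem _ (Set.mem_insert_of_mem _ (Set.mem_insert_of_mem _ (Set.mem_insert_of_mem _ (Set.mem_insert_of_mem _ (Set.mem_insert_of_mem _ (Set.mem_insert _ _)))))))))))))))))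
  have pa2G : (PresentedGroup.of (rels := rels p) Gen.a2) ^ p = 1 := by
    simpa only [_root_.map_pow, hmk] using hrel ((FreeGroup.of Gen.a2) ^ p) (by unfold rels; exact Set.mem_insert_of_mem _ (Set.mem_insert_of_mem _ (Set.mem_insert_of_mem _ (Set.mem_insert_of_mem _ (Set.mem_insert_of_mem _ (Set.mem_insert_of_mem _ (Set.mem_insert_of_mem _ (Set.mem_insert_of_mem _ (Set.mem_insert_of_mem _ (Set.mem_insert_of_mem _ (Set.mem_insert_of_mem _ (Set.mem_insert_of_mem _ (Set.mem_insert_of_mem _ (Set.mem_insert_of_mem _ (Set.mem_insert_of_mem _ (Set.mem_insert_of_mem _ (Set.mem_insert_of_mem _ (Set.mem_insert _ _))))))))))))))))))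
  obtain ⟨za, hAp⟩ := exists_lift_pow_one (f := f) (hf := hf) (hn := hn) hp _ paG
  obtain ⟨za1, hA1p⟩ := exists_lift_pow_one (f := f) (hf := hf) (hn := hn) hp _ pa1G
  obtain ⟨za2, hA2p⟩ := exists_lift_pow_one (f := f) (hf := hf) (hn := hn) hp _ pa2G
  let A : Ext f hf hn := ⟨za, (PresentedGroup.of (rels := rels p) Gen.a)⟩
  let A1 : Ext f hf hn := ⟨za1, (PresentedGroup.of (rels := rels p) Gen.a1)⟩
  let A2 : Ext f hf hn := ⟨za2, (PresentedGroup.of (rels := rels p) Gen.a2)⟩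
  let B1 : Ext f hf hn := A1⁻¹ * A⁻¹ * A1 * A
  let B2 : Ext f hf hn := A2⁻¹ * A⁻¹ * A2 * A
  let Gt : Ext f hf hn := A1⁻¹ * B1⁻¹ * A1 * B1
  let H : Ext f hf hn := A2⁻¹ * B2⁻¹ * A2 * B2
  have hAg : A.g = (PresentedGroup.of (rels := rels p) Gen.a) := rfl
  have hA1g : A1.g = (PresentedGroup.of (rels := rels p) Gen.a1) := rfl
  have hA2g : A2.g = (PresentedGroup.of (rels := rels p) Gen.a2) := rfl
  have hB1g : B1.g = (PresentedGroup.of (rels := rels p) Gen.b1) := hb1G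
  have hB2g : B2.g = (PresentedGroup.of (rels := rels p) Gen.b2) := hb2G
  have hGtg : Gt.g = (PresentedGroup.of (rels := rels p) Gen.g) := by
    have h1 : Gt.g = (PresentedGroup.of (rels := rels p) Gen.a1)⁻¹ * B1.g⁻¹ * (PresentedGroup.of (rels := rels p) Gen.a1) * B1.g := rfl
    rw [h1, hB1g]; exact hg1G
  have hHg : H.g = (PresentedGroup.of (rels := rels p) Gen.g) := by
    have h1 : H.g = (PresentedGroup.of (rels := rels p) Gen.a2)⁻¹ * B2.g⁻¹ * (PresentedGroup.of (rels := rels p) Gen.a2) * B2.g := rfl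
    rw [h1, hB2g]; exact hg2G
  have CC : ∀ u v : Ext f hf hn, u.g * v.g = v.g * u.g → u * v = v * u :=
    comm_of_base hsym
  have hBA : B1 * A = A * B1 := CC B1 A (by rw [hB1g, hAg]; exact cab1.symm)
  have hB2A : B2 * A = A * B2 := CC B2 A (by rw [hB2g, hAg]; exact cab2.symm)
  have hGtB1 : Gt * B1 = B1 * Gt := CC Gt B1 (by rw [hGtg, hB1g]; exact cb1g.symm)
  have hA1B2 : A1 * B2 = B2 * A1 := CC A1 B2 (by rw [hA1g, hB2g]; exact ca1b2)
  have hA2B1 : A2 * B1 = B1 * A2 := CC A2 B1 (by rw [hA2g, hB1g]; exact ca2b1)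
  have hGtA2 : Gt * A2 = A2 * Gt := CC Gt A2 (by rw [hGtg, hA2g]; exact ca2g.symm)
  have hGtB2 : Gt * B2 = B2 * Gt := CC Gt B2 (by rw [hGtg, hB2g]; exact cb2g.symm)
  have hHB2 : H * B2 = B2 * H := CC H B2 (by rw [hHg, hB2g]; exact cb2g.symm)
  have hGZ : (PresentedGroup.of (rels := rels p) Gen.a1) * (PresentedGroup.of (rels := rels p) Gen.b1) = (PresentedGroup.of (rels := rels p) Gen.b1) * (PresentedGroup.of (rels := rels p) Gen.a1) * (PresentedGroup.of (rels := rels p) Gen.g) := by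
    have h1 := com_move (PresentedGroup.of (rels := rels p) Gen.a1) (PresentedGroup.of (rels := rels p) Gen.b1)
    rw [hg1G] at h1; exact h1
  have hGW : (PresentedGroup.of (rels := rels p) Gen.a2) * (PresentedGroup.of (rels := rels p) Gen.b2) = (PresentedGroup.of (rels := rels p) Gen.b2) * (PresentedGroup.of (rels := rels p) Gen.a2) * (PresentedGroup.of (rels := rels p) Gen.g) := by
    have h1 := com_move (PresentedGroup.of (rels := rels p) Gen.a2) (PresentedGroup.of (rels := rels p) Gen.b2)
    rw [hg2G] at h1; exact h1
  have hGkey := keyCommute ca1b2 ca2b1 hGZ hGW ca2g.symm cb2g.symm cb2g.symm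
  have hGpair : ((PresentedGroup.of (rels := rels p) Gen.a1) * (PresentedGroup.of (rels := rels p) Gen.a2)) * ((PresentedGroup.of (rels := rels p) Gen.b1) * (PresentedGroup.of (rels := rels p) Gen.b2)⁻¹)
      = ((PresentedGroup.of (rels := rels p) Gen.b1) * (PresentedGroup.of (rels := rels p) Gen.b2)⁻¹) * ((PresentedGroup.of (rels := rels p) Gen.a1) * (PresentedGroup.of (rels := rels p) Gen.a2)) := by
    rw [hGkey, mul_inv_cancel, mul_one]
  have hEpair : (A1 * A2) * (B1 * B2⁻¹) = (B1 * B2⁻¹) * (A1 * A2) := by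
    refine CC (A1 * A2) (B1 * B2⁻¹) ?_
    simp only [mul_g, inv_g, hA1g, hA2g, hB1g, hB2g]
    exact hGpair
  have hEkey' : (A1 * A2) * (B1 * B2⁻¹) = (B1 * B2⁻¹) * (A1 * A2) * (Gt * H⁻¹) :=
    keyCommute hA1B2 hA2B1 (com_move A1 B1) (com_move A2 B2) hGtA2 hGtB2 hHB2
  have hGtH : Gt * H⁻¹ = 1 := mul_eq_left.mp (hEkey'.symm.trans hEpair)
  have hHGt : H = Gt := (mul_inv_eq_one.mp hGtH).symm
  have hB1p : B1 ^ p = 1 := by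
    have k3 := pow_shift (com_move A1 A) hBA p
    rw [show A ^ p = 1 from hAp] at k3
    have k4 : A1 = A1 * B1 ^ p := by simpa using k3
    exact mul_eq_left.mp k4.symm
  have hB2p : B2 ^ p = 1 := by
    have k3 := pow_shift (com_move A2 A) hB2A p
    rw [show A ^ p = 1 from hAp] at k3
    have k4 : A2 = A2 * B2 ^ p := by simpa using k3
    exact mul_eq_left.mp k4.symm
  have hGtp : Gt ^ p = 1 := by
    have k3 := pow_shift (com_move A1 B1) hGtB1 p
    rw [hB1p] at k3
    have k4 : A1 = A1 * Gt ^ p := by simpa using k3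
    exact mul_eq_left.mp k4.symm
  let F : Gen → Ext f hf hn := fun x => match x with
    | .a => A | .a1 => A1 | .a2 => A2 | .b1 => B1 | .b2 => B2 | .g => Gt
  have hrelsE : ∀ r ∈ rels p, FreeGroup.lift F r = 1 := by
    intro r hr
    simp only [rels, Set.mem_insert_iff, Set.mem_singleton_iff] at hr
    rcases hr with rfl|rfl|rfl|rfl|rfl|rfl|rfl|rfl|rfl|rfl|rfl|rfl|rfl|rfl|rfl|rfl|rfl|rfl|rfl|rfl|rfl
    · simp only [c, _root_.map_mul, _root_.map_inv, FreeGroup.lift_apply_of]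
      exact mul_inv_cancel B1
    · simp only [c, _root_.map_mul, _root_.map_inv, FreeGroup.lift_apply_of]
      exact mul_inv_cancel B2
    · simp only [c, _root_.map_mul, _root_.map_inv, FreeGroup.lift_apply_of]
      exact mul_inv_cancel Gt
    · simp only [c, _root_.map_mul, _root_.map_inv, FreeGroup.lift_apply_of]
      show H * Gt⁻¹ = 1
      rw [hHGt]; exact mul_inv_cancel Gt
    · simp only [c, _root_.map_mul, _root_.map_inv, FreeGroup.lift_apply_of]
      exact com_one_iff.mpr (CC A B1 (by rw [hAg, hB1g]; exact cab1))
    · simp only [c, _root_.map_mul, _root_.map_inv, FreeGroup.lift_apply_of]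
      exact com_one_iff.mpr (CC A B2 (by rw [hAg, hB2g]; exact cab2))
    · simp only [c, _root_.map_mul, _root_.map_inv, FreeGroup.lift_apply_of]
      exact com_one_iff.mpr (CC A Gt (by rw [hAg, hGtg]; exact cag))
    · simp only [c, _root_.map_mul, _root_.map_inv, FreeGroup.lift_apply_of]
      exact com_one_iff.mpr (CC A1 A2 (by rw [hA1g, hA2g]; exact ca12))
    · simp only [c, _root_.map_mul, _root_.map_inv, FreeGroup.lift_apply_of]
      exact com_one_iff.mpr (CC A1 B2 (by rw [hA1g, hB2g]; exact ca1b2))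
    · simp only [c, _root_.map_mul, _root_.map_inv, FreeGroup.lift_apply_of]
      exact com_one_iff.mpr (CC A1 Gt (by rw [hA1g, hGtg]; exact ca1g))
    · simp only [c, _root_.map_mul, _root_.map_inv, FreeGroup.lift_apply_of]
      exact com_one_iff.mpr (CC A2 B1 (by rw [hA2g, hB1g]; exact ca2b1))
    · simp only [c, _root_.map_mul, _root_.map_inv, FreeGroup.lift_apply_of]
      exact com_one_iff.mpr (CC A2 Gt (by rw [hA2g, hGtg]; exact ca2g))
    · simp only [c, _root_.map_mul, _root_.map_inv, FreeGroup.lift_apply_of]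
      exact com_one_iff.mpr (CC B1 B2 (by rw [hB1g, hB2g]; exact cb12))
    · simp only [c, _root_.map_mul, _root_.map_inv, FreeGroup.lift_apply_of]
      exact com_one_iff.mpr (CC B1 Gt (by rw [hB1g, hGtg]; exact cb1g))
    · simp only [c, _root_.map_mul, _root_.map_inv, FreeGroup.lift_apply_of]
      exact com_one_iff.mpr (CC B2 Gt (by rw [hB2g, hGtg]; exact cb2g))
    · simp only [_root_.map_pow, FreeGroup.lift_apply_of]
      exact hAp
    · simp only [_root_.map_pow, FreeGroup.lift_apply_of]
      exact hA1p
    · simp only [_root_.map_pow, FreeGroup.lift_apply_of]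
      exact hA2p
    · simp only [_root_.map_pow, FreeGroup.lift_apply_of]
      exact hB1p
    · simp only [_root_.map_pow, FreeGroup.lift_apply_of]
      exact hB2p
    · simp only [_root_.map_pow, FreeGroup.lift_apply_of]
      exact hGtp
  let s : PresentedGroup (rels p) →* Ext f hf hn := PresentedGroup.toGroup hrelsE
  let π : Ext f hf hn →* PresentedGroup (rels p) :=
    { toFun := Ext.g, map_one' := rfl, map_mul' := fun _ _ => rfl }
  have hcomp : π.comp s = MonoidHom.id (PresentedGroup (rels p)) := by
    refine PresentedGroup.ext fun x => ?_
    have h0 : s (PresentedGroup.of x) = F x := PresentedGroup.toGroup.of hrelsE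
    show π (s (PresentedGroup.of x)) = PresentedGroup.of x
    rw [h0]
    cases x
    · rfl
    · rfl
    · rfl
    · exact hB1g
    · exact hB2g
    · exact hGtg
  have hsg : ∀ q : PresentedGroup (rels p), (s q).g = q := fun q => by
    have h1 := DFunLike.congr_fun hcomp q
    exact h1
  refine ⟨fun q => -(s q).z, fun g h => ?_⟩
  have hz : (s (g * h)).z = (s g).z + (s h).z + f g h := by
    rw [_root_.map_mul, mul_z, hsg g, hsg h]
  show f g h = -(s h).z - -(s (g * h)).z + -(s g).z
  rw [hz]
  abel


theorem bogomolov_trivial_Phi31 (p : ℕ) (hp : p.Prime) (h3 : 3 < p)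
    (hcard : Nat.card (PresentedGroup (rels p)) = p ^ 6) :
    BogomolovMultiplierIsTrivial (PresentedGroup (rels p)) := by
  intro f0 hf0 hres
  have hsym0 : ∀ x y : PresentedGroup (rels p), x * y = y * x → f0 x y = f0 y x := by
    intro x y hxy
    have key : ∀ u v : PresentedGroup (rels p), u ∈ Subgroup.closure {x, y} →
        v ∈ Subgroup.closure {x, y} → Commute u v := by
      intro u v hu hv
      refine Subgroup.closure_induction₂ (p := fun a b _ _ => Commute a b)
        ?_ ?_ ?_ ?_ ?_ ?_ ?_ hu hv
      · intro a b ha hb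
        simp only [Set.mem_insert_iff, Set.mem_singleton_iff] at ha hb
        rcases ha with h | h
        · rcases hb with h' | h'
          · rw [h, h']
          · rw [h, h']; exact hxy
        · rcases hb with h' | h'
          · rw [h, h']; exact (show Commute x y from hxy).symm
          · rw [h, h']
      · exact fun z _ => Commute.one_left z
      · exact fun z _ => Commute.one_right z
      · exact fun a b d _ _ _ h1 h2 => h1.mul_left h2
      · exact fun b d a _ _ _ h1 h2 => h1.mul_right h2
      · exact fun a b _ _ h => h.inv_left
      · exact fun a b _ _ h => h.inv_right
    have hAcomm : ∀ u v : (Subgroup.closure {x, y} : Subgroup (PresentedGroup (rels p))),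
        u * v = v * u := by
      rintro ⟨u, hu⟩ ⟨v, hv⟩
      exact Subtype.ext (key u v hu hv)
    have hx : x ∈ Subgroup.closure ({x, y} : Set (PresentedGroup (rels p))) :=
      Subgroup.subset_closure (by simp)
    have hy : y ∈ Subgroup.closure ({x, y} : Set (PresentedGroup (rels p))) :=
      Subgroup.subset_closure (by simp)
    obtain ⟨cA, hcA⟩ := hres (Subgroup.closure {x, y}) ⟨hAcomm, x, y, rfl⟩
    have e1 : f0 x y = cA ⟨y, hy⟩ - cA (⟨x, hx⟩ * ⟨y, hy⟩) + cA ⟨x, hx⟩ := hcA ⟨x, hx⟩ ⟨y, hy⟩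
    have e2 : f0 y x = cA ⟨x, hx⟩ - cA (⟨y, hy⟩ * ⟨x, hx⟩) + cA ⟨y, hy⟩ := hcA ⟨y, hy⟩ ⟨x, hx⟩
    have hxyA : (⟨x, hx⟩ * ⟨y, hy⟩ : Subgroup.closure {x, y}) = ⟨y, hy⟩ * ⟨x, hx⟩ := hAcomm _ _
    rw [hxyA] at e1
    rw [e1, e2]
    abel
  have hf' : IsTwoCocycle (fun a b : PresentedGroup (rels p) => f0 a b - f0 1 1) := by
    intro g h j
    show (f0 h j - f0 1 1) - (f0 (g * h) j - f0 1 1) + (f0 g (h * j) - f0 1 1)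
        - (f0 g h - f0 1 1) = 0
    calc (f0 h j - f0 1 1) - (f0 (g * h) j - f0 1 1) + (f0 g (h * j) - f0 1 1)
        - (f0 g h - f0 1 1)
        = f0 h j - f0 (g * h) j + f0 g (h * j) - f0 g h := by abel
    _ = 0 := hf0 g h j
  have hn' : (fun a b : PresentedGroup (rels p) => f0 a b - f0 1 1) 1 1 = 0 :=
    sub_self (f0 1 1)
  have hsym' : ∀ x y : PresentedGroup (rels p), x * y = y * x →
      f0 x y - f0 1 1 = f0 y x - f0 1 1 := fun x y h => by rw [hsym0 x y h]
  obtain ⟨cc, hcc⟩ := aux_split p hp.ne_zero _ hf' hn' hsym'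
  refine ⟨fun q => cc q + f0 1 1, fun g h => ?_⟩
  have h1 : f0 g h - f0 1 1 = cc h - cc (g * h) + cc g := hcc g h
  show f0 g h = (cc h + f0 1 1) - (cc (g * h) + f0 1 1) + (cc g + f0 1 1)
  have h2 : f0 g h = (cc h - cc (g * h) + cc g) + f0 1 1 := by rw [← h1]; abel
  rw [h2]
  abel

end Stmt8
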